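/- Let X_1,...,X_m be nonempty closed convex sets in R^n with nonempty intersection X. With doubly stochastic nonnegative weights a^i_j, vectors x^i ∈ R^n, w^i = ∑_j a^i_j x^j, and updated vectors x^i_+ = P_{X_i}[w^i], we have for every x ∈ X: ∑_i ||x^i_+ - x|| ≤ ∑_i ||x^i - x||. -/

import Mathlib

open Finset

theorem stmt5 {n m : ℕ} (X : Fin m → Set (EuclideanSpace ℝ (Fin n)))
    (hne : ∀ i, (X i).Nonempty) (hcl : ∀ i, IsClosed (X i)) (hconv : ∀ i, Convex ℝ (X i))
    (hXne : (⋂ i, X i).Nonempty)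
    (a : Fin m → Fin m → ℝ) (hnonneg : ∀ i j, 0 ≤ a i j)
    (hrow : ∀ i, ∑ j, a i j = 1) (hcol : ∀ j, ∑ i, a i j = 1)
    (x w xplus : Fin m → EuclideanSpace ℝ (Fin n))
    (hw : ∀ i, w i = ∑ j, a i j • x j)
    (hproj : ∀ i, xplus i ∈ X i ∧ ∀ y ∈ X i, ‖w i - xplus i‖ ≤ ‖w i - y‖) :
    ∀ z ∈ ⋂ i, X i, ∑ i, ‖xplus i - z‖ ≤ ∑ i, ‖x i - z‖ := by
  intro z hz
  rw [Set.mem_iInter] at hz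
  -- step 1: ‖xplus i - z‖ ≤ ‖w i - z‖
  have step1 : ∀ i, ‖xplus i - z‖ ≤ ‖w i - z‖ := by
    intro i
    have hinf : ‖w i - xplus i‖ = ⨅ y : X i, ‖w i - y‖ := by
      apply le_antisymm
      · haveI : Nonempty (X i) := (hne i).to_subtype
        exact le_ciInf fun y => (hproj i).2 y y.2
      · exact ciInf_le ⟨0, fun b ⟨y, hy⟩ => hy ▸ norm_nonneg _⟩ (⟨xplus i, (hproj i).1⟩ : X i)
    have hvar := (norm_eq_iInf_iff_real_inner_le_zero (hconv i) (hproj i).1).mp hinf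
    have hz' := hvar z (hz i)
    have key : ‖w i - z‖ ^ 2 = ‖w i - xplus i‖ ^ 2 + ‖xplus i - z‖ ^ 2
        - 2 * inner ℝ (w i - xplus i) (z - xplus i) := by
      have : w i - z = (w i - xplus i) - (z - xplus i) := by abel
      rw [this, norm_sub_sq_real]
      have : ‖z - xplus i‖ = ‖xplus i - z‖ := norm_sub_rev _ _
      rw [this]; ring
    have h2 : ‖xplus i - z‖ ^ 2 ≤ ‖w i - z‖ ^ 2 := by nlinarith [norm_nonneg (w i - xplus i)]
    nlinarith [norm_nonneg (xplus i - z), norm_nonneg (w i - z)]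
  -- step 2: ‖w i - z‖ ≤ ∑ j, a i j * ‖x j - z‖
  have step2 : ∀ i, ‖w i - z‖ ≤ ∑ j, a i j * ‖x j - z‖ := by
    intro i
    have hz2 : w i - z = ∑ j, a i j • (x j - z) := by
      rw [hw i]
      have : (z : EuclideanSpace ℝ (Fin n)) = ∑ j, a i j • z := by
        rw [← Finset.sum_smul, hrow i, one_smul]
      calc (∑ j, a i j • x j) - z = (∑ j, a i j • x j) - ∑ j, a i j • z := by rw [← this]
        _ = ∑ j, a i j • (x j - z) := by rw [← Finset.sum_sub_distrib]; simp [smul_sub]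
    rw [hz2]
    calc ‖∑ j, a i j • (x j - z)‖ ≤ ∑ j, ‖a i j • (x j - z)‖ := norm_sum_le _ _
      _ = ∑ j, a i j * ‖x j - z‖ := by
          refine Finset.sum_congr rfl fun j _ => ?_
          rw [norm_smul, Real.norm_eq_abs, abs_of_nonneg (hnonneg i j)]
  calc ∑ i, ‖xplus i - z‖ ≤ ∑ i, ∑ j, a i j * ‖x j - z‖ :=
        Finset.sum_le_sum fun i _ => (step1 i).trans (step2 i)
    _ = ∑ j, (∑ i, a i j) * ‖x j - z‖ := by rw [Finset.sum_comm]; simp [Finset.sum_mul]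
    _ = ∑ j, ‖x j - z‖ := by simp [hcol]
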